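/- Let π ∈ S_{p+q+l} and σ ∈ S_NC(p,q,l) with π ≤ σ⁻¹γ_{p,q,l}. If π ∈ NC(p) × S_NC(q,l) (i.e. π is a product of a non-crossing permutation of the first circle and an annular non-crossing permutation of the last two circles), then σ ≲^{(1)} γ_{p,q,l}π⁻¹, meaning: for each block B of σ ∨ γ_{p,q,l}π⁻¹, σ|_B is non-crossing with respect to (γ_{p,q,l}π⁻¹)|_B, and #(σ ∨ γ_{p,q,l}π⁻¹) = #(γ_{p,q,l}π⁻¹) − 1. -/

import Mathlib

open Equiv

namespace ThirdOrderFree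

variable {α : Type*}

/-- The setoid whose classes are the cycles (orbits) of a permutation. -/
def sameCycleSetoid (σ : Perm α) : Setoid α :=
  ⟨σ.SameCycle,
    ⟨fun x => Equiv.Perm.SameCycle.refl σ x, fun h => h.symm, fun h h' => h.trans h'⟩⟩

/-- Number of cycles (orbits, including fixed points) of a permutation. -/
noncomputable def numCycles (σ : Perm α) : ℕ :=
  Nat.card (Quotient (sameCycleSetoid σ))

/-- The length `|σ| = n - #(σ)`. -/
noncomputable def len (σ : Perm α) : ℕ :=
  Nat.card α - numCycles σ

/-- Join of the cycle partitions of two permutations. -/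
def joinSetoid (π σ : Perm α) : Setoid α :=
  sameCycleSetoid π ⊔ sameCycleSetoid σ

/-- Number of blocks of `π ∨ σ`. -/
noncomputable def numBlocks (π σ : Perm α) : ℕ :=
  Nat.card (Quotient (joinSetoid π σ))

/-- `π ∨ σ` is the one-block partition. -/
def JoinTop (π σ : Perm α) : Prop :=
  ∀ x y : α, (joinSetoid π σ).r x y

/-- `π` is a non-crossing (annular) permutation with respect to `γ`. -/
def SNC (γ π : Perm α) : Prop :=
  JoinTop π γ ∧
    numCycles π + numCycles (π⁻¹ * γ) + numCycles γ = Nat.card α + 2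

/-- `τ` separates the points of `N`: no cycle of `τ` contains two distinct points of `N`. -/
def Separates (τ : Perm α) (N : Set α) : Prop :=
  ∀ x ∈ N, ∀ y ∈ N, τ.SameCycle x y → x = y

/-- The first-return map of `σ` on the set `{x | p x}`. -/
noncomputable def firstReturn (σ : Perm α) (p : α → Prop) (x : α) : α :=
  (σ ^ sInf {k : ℕ | 0 < k ∧ p ((σ ^ k) x)}) x

open Classical in
/-- The restriction of `σ` to `{x | p x}`: the unique permutation agreeing with the
first-return map (it exists whenever `α` is finite). -/
noncomputable def restrictPerm (σ : Perm α) (p : α → Prop) : Perm {x // p x} :=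
  if h : ∃ e : Perm {x // p x}, ∀ x : {x // p x}, (e x : α) = firstReturn σ p (x : α)
  then h.choose else 1

/-- `π ≤ σ` : each cycle of `π` is contained in a cycle of `σ` and on each cycle of
`σ` the restriction of `π` is a non-crossing permutation of that cycle. -/
def le' (π σ : Perm α) : Prop :=
  (∀ x y : α, π.SameCycle x y → σ.SameCycle x y) ∧
  ∀ x : α,
    numCycles (restrictPerm π (σ.SameCycle x)) +
      numCycles ((restrictPerm π (σ.SameCycle x))⁻¹ * restrictPerm σ (σ.SameCycle x)) =
      Nat.card {y // σ.SameCycle x y} + 1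

/-- `π ≲ σ` : on each block of `π ∨ σ`, `π` is annular non-crossing w.r.t. `σ`. -/
def ncRel (π σ : Perm α) : Prop :=
  ∀ x : α,
    SNC (restrictPerm σ ((joinSetoid π σ).r x)) (restrictPerm π ((joinSetoid π σ).r x))

/-- The permutation of `Σ i, Fin (n i)` rotating each block: the product of the
directed cycles `T i` of lengths `n i`. -/
def blockRotate {ι : Type*} (n : ι → ℕ) : Perm ((i : ι) × Fin (n i)) :=
  Equiv.sigmaCongrRight fun i => finRotate (n i)

/-- The first elements of the blocks. -/
def zeroSection {ι : Type*} (n : ι → ℕ) (hn : ∀ i, 0 < n i) :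
    ι ≃ {x : (i : ι) × Fin (n i) // x.2.val = 0} where
  toFun i := ⟨⟨i, ⟨0, hn i⟩⟩, rfl⟩
  invFun x := x.1.1
  left_inv i := rfl
  right_inv := fun x => by
    obtain ⟨⟨i, j⟩, hj⟩ := x
    exact Subtype.ext (congrArg (Sigma.mk i) (Fin.ext hj.symm))

/-- `π_{\vec n}` : merge the blocks `T i` along the cycles of `π`; within a block it
moves forward, and the last element of block `i` is sent to the first element of
block `π i`. -/
def mergePerm {ι : Type*} (n : ι → ℕ) (hn : ∀ i, 0 < n i) (π : Perm ι) :
    Perm ((i : ι) × Fin (n i)) :=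
  (π.extendDomain (zeroSection n hn)) * blockRotate n


/-! ### Basic lemmas -/

/-- An invariant predicate: `p (σ x) ↔ p x`. -/
def Invariant (σ : Perm α) (p : α → Prop) : Prop := ∀ x, p (σ x) ↔ p x

theorem Invariant.inv {σ : Perm α} {p : α → Prop} (h : Invariant σ p) :
    Invariant σ⁻¹ p := fun x => by
  conv_rhs => rw [← Equiv.apply_symm_apply σ x]
  exact (h _).symm

theorem Invariant.mul {σ τ : Perm α} {p : α → Prop} (hσ : Invariant σ p)
    (hτ : Invariant τ p) : Invariant (σ * τ) p := fun x => by
  simp only [Perm.mul_apply]; rw [hσ, hτ]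

theorem Invariant.one {p : α → Prop} : Invariant (1 : Perm α) p := fun _ => Iff.rfl

theorem Invariant.sameCycle {σ : Perm α} {p : α → Prop} (h : Invariant σ p)
    {x y : α} (hxy : σ.SameCycle x y) : p x ↔ p y := by
  obtain ⟨i, rfl⟩ := hxy
  induction i using Int.induction_on with
  | zero => simp
  | succ k ih =>
    rw [add_comm, zpow_add, zpow_one, Perm.mul_apply]
    exact ih.trans (h _).symm
  | pred k ih =>
    rw [sub_eq_add_neg, add_comm, zpow_add, Perm.mul_apply]
    refine ih.trans ?_
    simp only [zpow_neg, zpow_one]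
    exact (h.inv _).symm

theorem firstReturn_eq {σ : Perm α} {p : α → Prop} (h : Invariant σ p) (x : α) (hx : p x) :
    firstReturn σ p x = σ x := by
  have h1 : (1 : ℕ) ∈ {k : ℕ | 0 < k ∧ p ((σ ^ k) x)} := by
    constructor
    · norm_num
    · simpa using (h x).mpr hx
  have : sInf {k : ℕ | 0 < k ∧ p ((σ ^ k) x)} = 1 := by
    refine le_antisymm (Nat.sInf_le h1) ?_
    have := Nat.sInf_mem (s := {k : ℕ | 0 < k ∧ p ((σ ^ k) x)}) ⟨1, h1⟩
    exact this.1
  rw [firstReturn, this, pow_one]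

theorem restrictPerm_eq_subtypePerm {σ : Perm α} {p : α → Prop} (h : Invariant σ p) :
    restrictPerm σ p = Perm.subtypePerm σ (fun x => h x) := by
  have hex : ∃ e : Perm {x // p x}, ∀ x : {x // p x}, (e x : α) = firstReturn σ p (x : α) := by
    refine ⟨Perm.subtypePerm σ (fun x => h x), fun x => ?_⟩
    rw [firstReturn_eq h x x.2]; rfl
  ext x
  rw [restrictPerm, dif_pos hex]
  rw [hex.choose_spec x, firstReturn_eq h x x.2]
  rfl

theorem restrictPerm_apply {σ : Perm α} {p : α → Prop} (h : Invariant σ p)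
    (x : {x // p x}) : (restrictPerm σ p x : α) = σ x := by
  rw [restrictPerm_eq_subtypePerm h]; rfl

theorem restrictPerm_mul {σ τ : Perm α} {p : α → Prop} (hσ : Invariant σ p)
    (hτ : Invariant τ p) :
    restrictPerm (σ * τ) p = restrictPerm σ p * restrictPerm τ p := by
  rw [restrictPerm_eq_subtypePerm hσ, restrictPerm_eq_subtypePerm hτ,
    restrictPerm_eq_subtypePerm (hσ.mul hτ), Perm.subtypePerm_mul]

theorem restrictPerm_inv {σ : Perm α} {p : α → Prop} (hσ : Invariant σ p) :
    restrictPerm σ⁻¹ p = (restrictPerm σ p)⁻¹ := by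
  rw [restrictPerm_eq_subtypePerm hσ, restrictPerm_eq_subtypePerm hσ.inv,
    Perm.subtypePerm_inv]

theorem restrictPerm_sameCycle {σ : Perm α} {p : α → Prop} (h : Invariant σ p)
    {x y : {x // p x}} :
    (restrictPerm σ p).SameCycle x y ↔ σ.SameCycle (x : α) (y : α) := by
  rw [restrictPerm_eq_subtypePerm h]
  exact Perm.sameCycle_subtypePerm

/-! ### numCycles under equivalence -/

theorem permCongr_mul {β : Type*} (e : α ≃ β) (σ τ : Perm α) :
    e.permCongr (σ * τ) = e.permCongr σ * e.permCongr τ := by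
  ext x; simp

/-- `permCongr` as a monoid hom. -/
def permCongrHom {β : Type*} (e : α ≃ β) : Perm α →* Perm β :=
  MonoidHom.mk' e.permCongr (permCongr_mul e)

theorem permCongr_zpow {β : Type*} (e : α ≃ β) (σ : Perm α) (i : ℤ) :
    e.permCongr σ ^ i = e.permCongr (σ ^ i) :=
  (map_zpow (permCongrHom e) σ i).symm

theorem permCongr_inv {β : Type*} (e : α ≃ β) (σ : Perm α) :
    e.permCongr σ⁻¹ = (e.permCongr σ)⁻¹ :=
  map_inv (permCongrHom e) σ

theorem numCycles_congr {β : Type*} (e : α ≃ β) (σ : Perm α) :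
    numCycles (e.permCongr σ) = numCycles σ := by
  have key : ∀ x y : α, (sameCycleSetoid σ) x y ↔
      (sameCycleSetoid (e.permCongr σ)) (e x) (e y) := ?_
  · exact (Nat.card_congr (Quotient.congr e key)).symm
  intro x y
  show σ.SameCycle x y ↔ (e.permCongr σ).SameCycle (e x) (e y)
  constructor
  · rintro ⟨i, rfl⟩
    refine ⟨i, ?_⟩
    rw [permCongr_zpow]
    simp
  · rintro ⟨i, hi⟩
    refine ⟨i, ?_⟩
    rw [permCongr_zpow] at hi
    simp only [permCongr_apply, symm_apply_apply] at hi
    exact e.injective hi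

theorem sameCycleSetoid_one : (sameCycleSetoid (1 : Perm α)) = ⊥ := by
  refine Setoid.ext fun x y => ?_
  show (1 : Perm α).SameCycle x y ↔ x = y
  constructor
  · rintro ⟨i, rfl⟩; simp
  · rintro rfl; exact ⟨0, rfl⟩

theorem numCycles_one : numCycles (1 : Perm α) = Nat.card α := by
  rw [numCycles, sameCycleSetoid_one]
  refine Nat.card_congr ⟨Quotient.lift id (fun a b h => h), fun a => ⟦a⟧, ?_, fun a => rfl⟩
  intro q
  induction q using Quotient.ind
  rfl

/-! ### Step closure and join lemmas -/

/-- If every point is related to its image under `ρ`, then same-cycle points of `ρ`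
are related. -/
theorem step_closure (s : Setoid α) (ρ : Perm α) (h : ∀ x, s x (ρ x)) :
    ∀ {x y : α}, ρ.SameCycle x y → s x y := by
  have hnat : ∀ (k : ℕ) (x : α), s x ((ρ ^ k) x) := by
    intro k
    induction k with
    | zero => intro x; simpa using s.refl x
    | succ n ih =>
      intro x
      rw [pow_succ', Perm.mul_apply]
      exact Setoid.trans' s (ih x) (h _)
  rintro x y ⟨i, rfl⟩
  show s.r _ _
  rcases le_or_gt 0 i with hpos | hneg
  · obtain ⟨k, rfl⟩ := Int.eq_ofNat_of_zero_le hpos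
    rw [zpow_natCast]
    exact hnat k x
  · obtain ⟨k, hk⟩ : ∃ k : ℕ, i = -(k : ℤ) := ⟨i.natAbs, by omega⟩
    subst hk
    refine s.symm ?_
    have : (ρ ^ k) ((ρ ^ (-(k : ℤ))) x) = x := by
      rw [← zpow_natCast, ← Perm.mul_apply, ← zpow_add]
      simp
    conv_rhs => rw [← this]
    exact hnat k _

theorem sameCycleSetoid_le_iff {ρ : Perm α} {s : Setoid α} :
    sameCycleSetoid ρ ≤ s ↔ ∀ x, s x (ρ x) :=
  ⟨fun h x => h ⟨1, rfl⟩, fun h _ _ hxy => step_closure s ρ h hxy⟩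

theorem join_r_left {π σ : Perm α} {x y : α} (h : π.SameCycle x y) :
    (joinSetoid π σ).r x y :=
  le_sup_left (α := Setoid α) (a := sameCycleSetoid π) (b := sameCycleSetoid σ) h

theorem join_r_right {π σ : Perm α} {x y : α} (h : σ.SameCycle x y) :
    (joinSetoid π σ).r x y :=
  le_sup_right (α := Setoid α) (a := sameCycleSetoid π) (b := sameCycleSetoid σ) h

theorem joinSetoid_mul_left (σ τ : Perm α) :
    joinSetoid σ (σ⁻¹ * τ) = joinSetoid σ τ := by
  refine le_antisymm (sup_le le_sup_left ?_) (sup_le le_sup_left ?_)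
  · rw [sameCycleSetoid_le_iff]
    intro x
    exact (joinSetoid σ τ).trans (join_r_right ⟨1, rfl⟩)
      (join_r_left (σ := τ) (⟨-1, by simp⟩ : σ.SameCycle (τ x) (σ⁻¹ (τ x))))
  · rw [sameCycleSetoid_le_iff]
    intro x
    refine (joinSetoid σ (σ⁻¹ * τ)).trans
      (join_r_right (σ := σ⁻¹ * τ) (⟨1, rfl⟩ : (σ⁻¹ * τ).SameCycle x ((σ⁻¹ * τ) x))) ?_
    exact join_r_left (⟨1, by simp⟩ : σ.SameCycle ((σ⁻¹ * τ) x) (τ x))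

theorem numBlocks_mul_left (σ τ : Perm α) : numBlocks σ (σ⁻¹ * τ) = numBlocks σ τ := by
  unfold numBlocks
  rw [joinSetoid_mul_left]

/-- Join relation respects predicates invariant under both permutations. -/
theorem join_invariant {σ τ : Perm α} {p : α → Prop} (hσ : Invariant σ p)
    (hτ : Invariant τ p) {x y : α} (h : (joinSetoid σ τ).r x y) : p x ↔ p y := by
  have : joinSetoid σ τ ≤ Setoid.ker p := by
    refine sup_le ?_ ?_ <;> rw [sameCycleSetoid_le_iff] <;> intro z
    · exact propext (hσ.sameCycle (Equiv.Perm.sameCycle_apply_right.mpr (Equiv.Perm.SameCycle.refl σ z)))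
    · exact propext (hτ.sameCycle (Equiv.Perm.sameCycle_apply_right.mpr (Equiv.Perm.SameCycle.refl τ z)))
  exact Eq.to_iff (this h)

/-! ### Additivity of quotient cardinalities over an invariant predicate -/

open Classical in
/-- A setoid that respects `p` splits the quotient. -/
noncomputable def quotientSplit (s : Setoid α) (p : α → Prop)
    (hp : ∀ {x y}, s x y → (p x ↔ p y)) :
    Quotient s ≃ Quotient (s.comap (Subtype.val : {x // p x} → α)) ⊕
      Quotient (s.comap (Subtype.val : {x // ¬ p x} → α)) where
  toFun := Quotient.lift
    (fun x => if h : p x then Sum.inl (Quotient.mk _ (⟨x, h⟩ : {x // p x}))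
      else Sum.inr (Quotient.mk _ (⟨x, h⟩ : {x // ¬ p x})))
    (by
      intro a b hab
      show dite _ _ _ = dite _ _ _
      by_cases h : p a
      · rw [dif_pos h, dif_pos ((hp hab).mp h)]
        exact congrArg Sum.inl (Quotient.sound hab)
      · rw [dif_neg h, dif_neg (fun hb => h ((hp hab).mpr hb))]
        exact congrArg Sum.inr (Quotient.sound hab))
  invFun := Sum.elim
    (Quotient.lift (fun x => (Quotient.mk s x.val)) (fun a b hab => Quotient.sound hab))
    (Quotient.lift (fun x => (Quotient.mk s x.val)) (fun a b hab => Quotient.sound hab))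
  left_inv := by
    intro q
    induction q using Quotient.ind with
    | _ a =>
      show Sum.elim _ _ (dite _ _ _) = _
      by_cases h : p a
      · rw [dif_pos h]
        rfl
      · rw [dif_neg h]
        rfl
  right_inv := by
    intro q
    rcases q with q | q
    · induction q using Quotient.ind with
      | _ a =>
        show dite _ _ _ = _
        rw [dif_pos a.2]
    · induction q using Quotient.ind with
      | _ a =>
        show dite _ _ _ = _
        rw [dif_neg a.2]

theorem card_quotient_split [Finite α] (s : Setoid α) (p : α → Prop)
    (hp : ∀ {x y}, s x y → (p x ↔ p y)) :
    Nat.card (Quotient s) = Nat.card (Quotient (s.comap (Subtype.val : {x // p x} → α))) +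
      Nat.card (Quotient (s.comap (Subtype.val : {x // ¬ p x} → α))) := by
  rw [Nat.card_congr (quotientSplit s p hp)]
  exact Nat.card_sum

/-! ### Restriction specializations -/

theorem comap_sameCycleSetoid {σ : Perm α} {p : α → Prop} (h : Invariant σ p) :
    (sameCycleSetoid σ).comap (Subtype.val : {x // p x} → α) =
      sameCycleSetoid (restrictPerm σ p) := by
  refine Setoid.ext fun x y => ?_
  rw [Setoid.comap_rel]
  exact (restrictPerm_sameCycle h).symm

theorem Invariant.not {σ : Perm α} {p : α → Prop} (h : Invariant σ p) :
    Invariant σ (fun x => ¬ p x) := fun x => not_congr (h x)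

theorem numCycles_split [Finite α] {σ : Perm α} {p : α → Prop} (h : Invariant σ p) :
    numCycles σ = numCycles (restrictPerm σ p) + numCycles (restrictPerm σ (fun x => ¬ p x)) := by
  have := card_quotient_split (sameCycleSetoid σ) p (fun hxy => h.sameCycle hxy)
  rw [comap_sameCycleSetoid h, comap_sameCycleSetoid h.not] at this
  exact this

theorem restrictPerm_one {p : α → Prop} : restrictPerm (1 : Perm α) p = 1 := by
  rw [restrictPerm_eq_subtypePerm Invariant.one]
  exact Perm.subtypePerm_one p _

theorem card_split [Finite α] (p : α → Prop) :
    Nat.card α = Nat.card {x // p x} + Nat.card {x // ¬ p x} := by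
  have := numCycles_split (σ := (1 : Perm α)) (p := p) Invariant.one
  rwa [restrictPerm_one, restrictPerm_one, numCycles_one, numCycles_one, numCycles_one] at this

theorem joinSetoid_restrict {σ τ : Perm α} {p : α → Prop} (hσ : Invariant σ p)
    (hτ : Invariant τ p) :
    joinSetoid (restrictPerm σ p) (restrictPerm τ p) =
      (joinSetoid σ τ).comap (Subtype.val : {x // p x} → α) := by
  refine le_antisymm (sup_le ?_ ?_) ?_
  · rw [← comap_sameCycleSetoid hσ]
    intro x y hxy
    rw [Setoid.comap_rel] at hxy ⊢
    exact join_r_left hxy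
  · rw [← comap_sameCycleSetoid hτ]
    intro x y hxy
    rw [Setoid.comap_rel] at hxy ⊢
    exact join_r_right hxy
  · intro x y hxy
    rw [Setoid.comap_rel] at hxy
    have hEq : joinSetoid σ τ = Relation.EqvGen.setoid (fun a b => (sameCycleSetoid σ) a b ∨
        (sameCycleSetoid τ) a b) := Setoid.sup_eq_eqvGen _ _
    have hgen : Relation.EqvGen (fun a b => (sameCycleSetoid σ) a b ∨ (sameCycleSetoid τ) a b)
        (x : α) (y : α) := by
      rw [hEq] at hxy
      exact hxy
    clear hxy
    -- prove by induction, carrying the membership proofs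
    have main : ∀ z w : α, Relation.EqvGen (fun a b => (sameCycleSetoid σ) a b ∨
        (sameCycleSetoid τ) a b) z w → ∀ (hz : p z) (hw : p w),
        (joinSetoid (restrictPerm σ p) (restrictPerm τ p)).r ⟨z, hz⟩ ⟨w, hw⟩ := by
      intro z w hzw
      induction hzw with
      | rel a b hab =>
        intro hz hw
        rcases hab with hab | hab
        · exact join_r_left ((restrictPerm_sameCycle hσ).mpr hab)
        · exact join_r_right ((restrictPerm_sameCycle hτ).mpr hab)
      | refl a => intro hz hw; exact Setoid.refl' _ _
      | symm a b hab ih => intro hz hw; exact Setoid.symm' _ (ih hw hz)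
      | trans a b c hab hbc ih1 ih2 =>
        intro ha hc
        have hb : p b := by
          have : (joinSetoid σ τ).r a b := by rw [hEq]; exact hab
          exact (join_invariant hσ hτ this).mp ha
        exact Setoid.trans' _ (ih1 ha hb) (ih2 hb hc)
    exact main x y hgen x.2 y.2

theorem numBlocks_split [Finite α] {σ τ : Perm α} {p : α → Prop} (hσ : Invariant σ p)
    (hτ : Invariant τ p) :
    numBlocks σ τ = numBlocks (restrictPerm σ p) (restrictPerm τ p) +
      numBlocks (restrictPerm σ (fun x => ¬ p x)) (restrictPerm τ (fun x => ¬ p x)) := by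
  have := card_quotient_split (joinSetoid σ τ) p (fun hxy => join_invariant hσ hτ hxy)
  rw [← joinSetoid_restrict hσ hτ, ← joinSetoid_restrict hσ.not hτ.not] at this
  exact this

theorem numBlocks_eq_one [Finite α] [Nonempty α] {σ τ : Perm α} (h : JoinTop σ τ) :
    numBlocks σ τ = 1 := by
  rw [numBlocks, Nat.card_eq_one_iff_unique]
  constructor
  · constructor
    intro q1 q2
    induction q1 using Quotient.ind with
    | _ a =>
      induction q2 using Quotient.ind with
      | _ b => exact Quotient.sound (h a b)
  · exact ⟨⟦Classical.arbitrary α⟧⟩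

/-- The invariance of a join block. -/
theorem block_invariant_left (σ τ : Perm α) (x : α) :
    Invariant σ (fun z => (joinSetoid σ τ).r x z) := by
  intro z
  constructor
  · intro h
    exact Setoid.trans' _ h (Setoid.symm' _ (join_r_left
      (Equiv.Perm.sameCycle_apply_right.mpr (Equiv.Perm.SameCycle.refl σ z))))
  · intro h
    exact Setoid.trans' _ h (join_r_left
      (Equiv.Perm.sameCycle_apply_right.mpr (Equiv.Perm.SameCycle.refl σ z)))

theorem block_invariant_right (σ τ : Perm α) (x : α) :
    Invariant τ (fun z => (joinSetoid σ τ).r x z) := by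
  intro z
  constructor
  · intro h
    exact Setoid.trans' _ h (Setoid.symm' _ (join_r_right
      (Equiv.Perm.sameCycle_apply_right.mpr (Equiv.Perm.SameCycle.refl τ z))))
  · intro h
    exact Setoid.trans' _ h (join_r_right
      (Equiv.Perm.sameCycle_apply_right.mpr (Equiv.Perm.SameCycle.refl τ z)))

theorem joinTop_restrict_block (σ τ : Perm α) (x : α) :
    JoinTop (restrictPerm σ (fun z => (joinSetoid σ τ).r x z))
      (restrictPerm τ (fun z => (joinSetoid σ τ).r x z)) := by
  intro z w
  have := joinSetoid_restrict (block_invariant_left σ τ x) (block_invariant_right σ τ x)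
  rw [this]
  show (joinSetoid σ τ).r (z : α) (w : α)
  exact Setoid.trans' _ (Setoid.symm' _ z.2) w.2

/-- Restriction of `ρ` to one of its own cycles has a single cycle. -/
theorem numCycles_restrict_cycle [Finite α] (ρ : Perm α) (x : α) :
    numCycles (restrictPerm ρ (fun z => ρ.SameCycle x z)) = 1 := by
  have hinv : Invariant ρ (fun z => ρ.SameCycle x z) := by
    intro z
    exact Equiv.Perm.sameCycle_apply_right
  rw [numCycles, Nat.card_eq_one_iff_unique]
  constructor
  · constructor
    intro q1 q2
    induction q1 using Quotient.ind with
    | _ a =>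
      induction q2 using Quotient.ind with
      | _ b =>
        refine Quotient.sound ?_
        show (restrictPerm ρ _).SameCycle a b
        rw [restrictPerm_sameCycle hinv]
        exact (a.2.symm).trans b.2
  · exact ⟨⟦⟨x, Equiv.Perm.SameCycle.refl ρ x⟩⟧⟩

/-! ### Collapse lemma -/

theorem collapse_lemma [Finite α] (s t : Setoid α) (hst : s ≤ t) (a b : α)
    (hab : ¬ s a b) (htab : t a b)
    (hdisj : ∀ z w, t z w → s z w ∨ (s z a ∧ s b w) ∨ (s z b ∧ s a w)) :
    Nat.card (Quotient s) = Nat.card (Quotient t) + 1 := by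
  set f : Quotient s → Quotient t :=
    Quotient.lift (fun x => (Quotient.mk t x)) (fun u v h => Quotient.sound (hst h)) with hf
  have hfmk : ∀ z : α, f (Quotient.mk s z) = Quotient.mk t z := fun z => rfl
  set β₀ : Quotient t := Quotient.mk t a with hβ₀
  have h1 := card_split (α := Quotient s) (fun x => f x = β₀)
  have h2 := card_split (α := Quotient t) (fun y => y = β₀)
  have e3 : Nat.card {y : Quotient t // y = β₀} = 1 := by
    rw [Nat.card_eq_one_iff_unique]
    exact ⟨⟨fun u v => Subtype.ext (u.2.trans v.2.symm)⟩, ⟨⟨β₀, rfl⟩⟩⟩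
  have e4 : Nat.card {x : Quotient s // ¬ f x = β₀} = Nat.card {y : Quotient t // ¬ y = β₀} := by
    refine Nat.card_congr (Equiv.ofBijective (fun x => ⟨f x.1, x.2⟩) ⟨?_, ?_⟩)
    · rintro ⟨x, hx⟩ ⟨y, hy⟩ hxy
      simp only [Subtype.mk.injEq] at hxy
      refine Subtype.ext ?_
      induction x using Quotient.ind with
      | _ u =>
        induction y using Quotient.ind with
        | _ v =>
          rw [hfmk, hfmk] at hxy
          have htuv : t u v := Quotient.exact hxy
          rcases hdisj u v htuv with h | ⟨h, _⟩ | ⟨h, _⟩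
          · exact Quotient.sound h
          · exact absurd (by rw [hfmk]; exact Quotient.sound (hst h)) hx
          · exact absurd (by
              rw [hfmk]
              exact (Quotient.sound (t.trans (hst h) (t.symm htab)) : Quotient.mk t u = β₀)) hx
    · rintro ⟨y, hy⟩
      induction y using Quotient.ind with
      | _ v => exact ⟨⟨Quotient.mk s v, hy⟩, rfl⟩
  have e5 : Nat.card {x : Quotient s // f x = β₀} = 2 := by
    rw [Nat.card_eq_two_iff]
    refine ⟨⟨Quotient.mk s a, rfl⟩, ⟨Quotient.mk s b, ?_⟩, ?_, ?_⟩
    · rw [hfmk]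
      exact Quotient.sound (t.symm htab)
    · intro hcon
      have : Quotient.mk s a = Quotient.mk s b := congrArg Subtype.val hcon
      exact hab (Quotient.exact this)
    · refine Set.eq_univ_of_forall ?_
      rintro ⟨x, hx⟩
      induction x using Quotient.ind with
      | _ z =>
        have htza : t z a := by
          rw [hfmk] at hx
          exact Quotient.exact hx
        simp only [Set.mem_insert_iff, Set.mem_singleton_iff]
        rcases hdisj z a htza with h | ⟨h, _⟩ | ⟨h, _⟩
        · exact Or.inl (Subtype.ext (Quotient.sound h))
        · exact Or.inl (Subtype.ext (Quotient.sound h))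
        · exact Or.inr (Subtype.ext (Quotient.sound h))
  omega

/-! ### The transposition lemma -/

section Swap

variable [Finite α] [DecidableEq α] {ρ : Perm α} {a b : α}

private theorem pow_base_mul {M : ℕ} (hMa : (ρ ^ M) a = a) : ∀ q : ℕ, (ρ ^ (M * q)) a = a := by
  intro q
  induction q with
  | zero => simp
  | succ n ih =>
    rw [Nat.mul_succ, pow_add, Perm.mul_apply, hMa, ih]

private theorem pow_mod_apply {M : ℕ} (hMa : (ρ ^ M) a = a) (i : ℕ) :
    (ρ ^ i) a = (ρ ^ (i % M)) a := by
  conv_lhs => rw [← Nat.mod_add_div i M, pow_add, Perm.mul_apply, pow_base_mul hMa]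

theorem exists_orbit_period (ρ : Perm α) (a : α) : ∃ k : ℕ, 0 < k ∧ (ρ ^ k) a = a := by
  refine ⟨orderOf ρ, ?_, ?_⟩
  · exact orderOf_pos ρ
  · rw [pow_orderOf_eq_one]; rfl

private theorem traj {ρ ρ' : Perm α} {c a0 : α} {J : ℕ} (h1 : ρ' c = ρ a0)
    (hstep : ∀ j, 1 ≤ j → j < J → ρ' ((ρ ^ j) a0) = ρ ((ρ ^ j) a0)) :
    ∀ j, 1 ≤ j → j ≤ J → (ρ' ^ j) c = (ρ ^ j) a0 := by
  intro j
  induction j with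
  | zero => omega
  | succ n ih =>
    intro _ hnJ
    rcases Nat.eq_zero_or_pos n with rfl | hn
    · simpa using h1
    · rw [pow_succ', pow_succ', Perm.mul_apply, Perm.mul_apply,
        ih hn (le_trans (Nat.le_succ n) hnJ), hstep n hn (by omega)]

private theorem sc_nat {ρ : Perm α} {x y : α} (j : ℕ) (h : (ρ ^ j) x = y) :
    ρ.SameCycle x y := ⟨(j : ℤ), by rw [zpow_natCast]; exact h⟩

theorem sameCycle_mul_swap_of_not_sameCycle (hab : a ≠ b) (h : ¬ ρ.SameCycle a b) :
    (ρ * Equiv.swap a b).SameCycle a b := by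
  set ρ' := ρ * Equiv.swap a b with hρ'
  have hM := exists_orbit_period ρ a
  set M := Nat.find hM with hMdef
  obtain ⟨hM0, hMa⟩ := Nat.find_spec hM
  have hMmin : ∀ k, 0 < k → k < M → (ρ ^ k) a ≠ a := by
    intro k hk0 hkM hcon
    exact (Nat.find_min hM hkM) ⟨hk0, hcon⟩
  have hb' : ρ' b = ρ a := by
    rw [hρ', Perm.mul_apply, Equiv.swap_apply_right]
  have key := traj (ρ := ρ) (ρ' := ρ') (c := b) (a0 := a) (J := M) hb' ?_
  · refine Equiv.Perm.SameCycle.symm (sc_nat M ?_)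
    rw [key M hM0 (le_refl M), hMa]
  · intro j hj1 hjM
    have hne_a : (ρ ^ j) a ≠ a := hMmin j hj1 hjM
    have hne_b : (ρ ^ j) a ≠ b := fun hc => h (sc_nat j hc)
    rw [hρ', Perm.mul_apply, Equiv.swap_apply_of_ne_of_ne hne_a hne_b]

theorem numCycles_mul_swap_of_sameCycle (hab : a ≠ b) (hSC : ρ.SameCycle a b) :
    numCycles (ρ * Equiv.swap a b) = numCycles ρ + 1 := by
  set ρ' := ρ * Equiv.swap a b with hρ'
  have happ : ∀ z, z ≠ a → z ≠ b → ρ' z = ρ z := by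
    intro z hza hzb
    rw [hρ', Perm.mul_apply, Equiv.swap_apply_of_ne_of_ne hza hzb]
  have ha' : ρ' a = ρ b := by rw [hρ', Perm.mul_apply, Equiv.swap_apply_left]
  have hb' : ρ' b = ρ a := by rw [hρ', Perm.mul_apply, Equiv.swap_apply_right]
  -- periods
  have hM := exists_orbit_period ρ a
  set M := Nat.find hM with hMdef
  obtain ⟨hM0, hMa⟩ := Nat.find_spec hM
  have hMmin : ∀ k, 0 < k → k < M → (ρ ^ k) a ≠ a := fun k hk0 hkM hcon =>
    (Nat.find_min hM hkM) ⟨hk0, hcon⟩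
  have hm : ∃ k : ℕ, 0 < k ∧ (ρ ^ k) a = b := by
    obtain ⟨i, _, hi⟩ := hSC.exists_pow_eq'
    rcases Nat.eq_zero_or_pos i with rfl | hi0
    · exact absurd (by simpa using hi) hab
    · exact ⟨i, hi0, hi⟩
  set m := Nat.find hm with hmdef
  obtain ⟨hm0, hma⟩ := Nat.find_spec hm
  have hmmin : ∀ k, 0 < k → k < m → (ρ ^ k) a ≠ b := fun k hk0 hkm hcon =>
    (Nat.find_min hm hkm) ⟨hk0, hcon⟩
  have hmM : m < M := by
    by_contra hcon
    push_neg at hcon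
    have h1 : (ρ ^ (m - M)) a = b := by
      have : (ρ ^ m) a = (ρ ^ (m - M)) ((ρ ^ M) a) := by
        rw [← Perm.mul_apply, ← pow_add]
        congr 2
        omega
      rw [hMa] at this
      rw [← this, hma]
    rcases Nat.eq_zero_or_pos (m - M) with hz | hpos
    · rw [hz] at h1
      exact hab (by simpa using h1)
    · exact hmmin _ hpos (by omega) h1
  -- avoidance facts
  have A1 : ∀ j, 1 ≤ j → j < m → (ρ ^ j) a ≠ a ∧ (ρ ^ j) a ≠ b := by
    intro j hj1 hjm
    exact ⟨hMmin j hj1 (by omega), hmmin j hj1 hjm⟩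
  have A2 : ∀ j, m + 1 ≤ j → j < M → (ρ ^ j) a ≠ a ∧ (ρ ^ j) a ≠ b := by
    intro j hj1 hjM
    refine ⟨hMmin j (by omega) hjM, ?_⟩
    intro hcon
    have h1 : (ρ ^ (M - j + m)) a = a := by
      have e1 : (ρ ^ (M - j)) ((ρ ^ j) a) = a := by
        rw [← Perm.mul_apply, ← pow_add]
        have : M - j + j = M := by omega
        rw [this, hMa]
      rw [hcon, ← hma, ← Perm.mul_apply, ← pow_add] at e1
      exact e1
    exact hMmin _ (by omega) (by omega) h1
  -- trajectories
  have K1 := traj (ρ := ρ) (ρ' := ρ') (c := b) (a0 := a) (J := m) hb' ?_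
  swap
  · intro j hj1 hjm
    exact happ _ (A1 j hj1 hjm).1 (A1 j hj1 hjm).2
  have hρb : ρ b = (ρ ^ (m + 1)) a := by
    rw [← hma, pow_succ', Perm.mul_apply]
  have hpow_b : ∀ j : ℕ, (ρ ^ j) b = (ρ ^ (j + m)) a := by
    intro j
    rw [← hma, ← Perm.mul_apply, ← pow_add]
  have K2 := traj (ρ := ρ) (ρ' := ρ') (c := a) (a0 := b) (J := M - m) (by rw [ha']) ?_
  swap
  · intro j hj1 hjM
    rw [hpow_b]
    exact happ _ (A2 _ (by omega) (by omega)).1 (A2 _ (by omega) (by omega)).2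
  -- claim (ii)
  have claim2 : ∀ z, ρ.SameCycle a z → ρ'.SameCycle a z ∨ ρ'.SameCycle b z := by
    intro z hz
    obtain ⟨i, _, hi⟩ := hz.exists_pow_eq'
    have hr : (ρ ^ (i % M)) a = z := by rw [← pow_mod_apply hMa, hi]
    have hrM : i % M < M := Nat.mod_lt _ hM0
    set r := i % M with hrdef
    rcases Nat.eq_zero_or_pos r with hz0 | hr0
    · left
      rw [hz0] at hr
      simp only [pow_zero, Perm.one_apply] at hr
      rw [← hr]
    · rcases le_or_gt r m with hrm | hrm
      · right
        exact sc_nat r (by rw [K1 r hr0 hrm, hr])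
      · left
        refine sc_nat (r - m) ?_
        rw [K2 (r - m) (by omega) (by omega), hpow_b]
        have : r - m + m = r := by omega
        rw [this, hr]
  -- claim (iii)
  have claim3 : ¬ ρ'.SameCycle a b := by
    have hPS : ∀ k : ℕ, (ρ' ^ k) a = a ∨
        ∃ j, m + 1 ≤ j ∧ j ≤ M - 1 ∧ (ρ' ^ k) a = (ρ ^ j) a := by
      intro k
      induction k with
      | zero => left; simp
      | succ n ih =>
        rw [pow_succ', Perm.mul_apply]
        rcases ih with hcase | ⟨j, hj1, hj2, hcase⟩
        · rw [hcase, ha', hρb]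
          rcases Nat.lt_or_ge (m + 1) M with hlt | hge
          · right; exact ⟨m + 1, le_refl _, by omega, rfl⟩
          · left
            have : m + 1 = M := by omega
            rw [this, hMa]
        · rw [hcase, happ _ (A2 j hj1 (by omega)).1 (A2 j hj1 (by omega)).2,
            ← Perm.mul_apply, ← pow_succ']
          rcases Nat.lt_or_ge (j + 1) M with hlt | hge
          · right; exact ⟨j + 1, by omega, by omega, rfl⟩
          · left
            have : j + 1 = M := by omega
            rw [this, hMa]
    intro hcon
    obtain ⟨k, _, hk⟩ := hcon.exists_pow_eq'
    rcases hPS k with hcase | ⟨j, hj1, hj2, hcase⟩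
    · rw [hk] at hcase; exact hab hcase.symm
    · rw [hk] at hcase
      exact (A2 j hj1 (by omega)).2 hcase.symm
  -- s ≤ t
  have hst : sameCycleSetoid ρ' ≤ sameCycleSetoid ρ := by
    rw [sameCycleSetoid_le_iff]
    intro z
    show ρ.SameCycle z (ρ' z)
    rcases eq_or_ne z a with rfl | hza
    · rw [ha']
      exact Equiv.Perm.SameCycle.trans hSC
        (Equiv.Perm.sameCycle_apply_right.mpr (Equiv.Perm.SameCycle.refl ρ b))
    rcases eq_or_ne z b with rfl | hzb
    · rw [hb']
      exact Equiv.Perm.SameCycle.trans hSC.symm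
        (Equiv.Perm.sameCycle_apply_right.mpr (Equiv.Perm.SameCycle.refl ρ a))
    · rw [happ z hza hzb]
      exact Equiv.Perm.sameCycle_apply_right.mpr (Equiv.Perm.SameCycle.refl ρ z)
  -- off-cycle agreement
  have hoff : ∀ z w, ¬ ρ.SameCycle a z → ρ.SameCycle z w → ρ'.SameCycle z w := by
    intro z w hza hzw
    have hagree : ∀ k : ℕ, (ρ' ^ k) z = (ρ ^ k) z := by
      intro k
      induction k with
      | zero => simp
      | succ n ih =>
        rw [pow_succ', pow_succ', Perm.mul_apply, Perm.mul_apply, ih]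
        refine happ _ ?_ ?_
        · intro hc
          exact hza (Equiv.Perm.SameCycle.symm (sc_nat n hc))
        · intro hc
          exact hza (Equiv.Perm.SameCycle.trans hSC
            (Equiv.Perm.SameCycle.symm (sc_nat n hc)))
    obtain ⟨i, _, hi⟩ := hzw.exists_pow_eq'
    exact sc_nat i (by rw [hagree, hi])
  -- disjunction hypothesis
  have hdisj : ∀ z w, (sameCycleSetoid ρ) z w →
      (sameCycleSetoid ρ') z w ∨
      ((sameCycleSetoid ρ') z a ∧ (sameCycleSetoid ρ') b w) ∨
      ((sameCycleSetoid ρ') z b ∧ (sameCycleSetoid ρ') a w) := by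
    intro z w hzw
    by_cases hz : ρ.SameCycle a z
    · have hw : ρ.SameCycle a w := hz.trans hzw
      rcases claim2 z hz with h1 | h1 <;> rcases claim2 w hw with h2 | h2
      · exact Or.inl (h1.symm.trans h2)
      · exact Or.inr (Or.inl ⟨h1.symm, h2⟩)
      · exact Or.inr (Or.inr ⟨h1.symm, h2⟩)
      · exact Or.inl (h1.symm.trans h2)
    · exact Or.inl (hoff z w hz hzw)
  have := collapse_lemma (sameCycleSetoid ρ') (sameCycleSetoid ρ) hst a b claim3 hSC hdisj
  exact this

theorem numCycles_mul_swap_of_not_sameCycle (hab : a ≠ b) (h : ¬ ρ.SameCycle a b) :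
    numCycles (ρ * Equiv.swap a b) + 1 = numCycles ρ := by
  have h2 := sameCycle_mul_swap_of_not_sameCycle hab h
  have h3 := numCycles_mul_swap_of_sameCycle (ρ := ρ * Equiv.swap a b) hab h2
  rw [mul_assoc, Equiv.swap_mul_self, mul_one] at h3
  omega

end Swap

/-! ### The genus inequality -/

/-- The "pair join" of a setoid: merge the classes of `a` and `b`. -/
def pairSetoid (s : Setoid α) (a b : α) : Setoid α where
  r z w := s z w ∨ (s z a ∧ s b w) ∨ (s z b ∧ s a w)
  iseqv := by
    constructor
    · intro z
      exact Or.inl (s.refl z)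
    · intro z w h
      rcases h with h | ⟨h1, h2⟩ | ⟨h1, h2⟩
      · exact Or.inl (s.symm h)
      · exact Or.inr (Or.inr ⟨s.symm h2, s.symm h1⟩)
      · exact Or.inr (Or.inl ⟨s.symm h2, s.symm h1⟩)
    · intro z w u h h'
      rcases h with h | ⟨h1, h2⟩ | ⟨h1, h2⟩ <;>
        rcases h' with h' | ⟨h1', h2'⟩ | ⟨h1', h2'⟩
      · exact Or.inl (s.trans h h')
      · exact Or.inr (Or.inl ⟨s.trans h h1', h2'⟩)
      · exact Or.inr (Or.inr ⟨s.trans h h1', h2'⟩)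
      · exact Or.inr (Or.inl ⟨h1, s.trans h2 h'⟩)
      · -- z~a, b~w ; w~a, b~u : then b~a, use third
        have hba : s b a := s.trans h2 h1'
        exact Or.inr (Or.inr ⟨s.trans h1 (s.symm hba), s.trans (s.symm hba) h2'⟩)
      · exact Or.inl (s.trans h1 h2')
      · exact Or.inr (Or.inr ⟨h1, s.trans h2 h'⟩)
      · exact Or.inl (s.trans h1 h2')
      · have hab' : s a b := s.trans h2 h1'
        exact Or.inl (s.trans h1 (s.trans (s.symm hab') h2'))

theorem numCycles_le_card [Finite α] (σ : Perm α) : numCycles σ ≤ Nat.card α :=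
  Nat.card_le_card_of_surjective _ Quotient.mk_surjective

theorem card_quotient_lt [Finite α] (s : Setoid α) {a b : α} (hab : a ≠ b)
    (h : s a b) : Nat.card (Quotient s) < Nat.card α := by
  cases nonempty_fintype α
  have : DecidableEq (Quotient s) := Classical.decEq _
  have : Fintype (Quotient s) := Fintype.ofFinite _
  rw [Nat.card_eq_fintype_card, Nat.card_eq_fintype_card]
  refine Fintype.card_lt_of_surjective_not_injective _ Quotient.mk_surjective ?_
  intro hinj
  exact hab (hinj (Quotient.sound h))

theorem eq_one_of_numCycles_eq_card [Finite α] {σ : Perm α}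
    (h : numCycles σ = Nat.card α) : σ = 1 := by
  by_contra hcon
  obtain ⟨a, ha⟩ : ∃ a, σ a ≠ a := by
    by_contra hall
    push_neg at hall
    exact hcon (Equiv.ext hall)
  have := card_quotient_lt (sameCycleSetoid σ) (Ne.symm ha)
    (Equiv.Perm.sameCycle_apply_right.mpr (Equiv.Perm.SameCycle.refl σ a))
  rw [numCycles] at h
  omega

theorem joinSetoid_one (A : Perm α) : joinSetoid A 1 = sameCycleSetoid A := by
  rw [joinSetoid, sameCycleSetoid_one, sup_bot_eq]

theorem sameCycle_mul_le_join (A B : Perm α) :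
    sameCycleSetoid (A * B) ≤ joinSetoid A B := by
  rw [sameCycleSetoid_le_iff]
  intro z
  exact Setoid.trans' _
    (join_r_right (Equiv.Perm.sameCycle_apply_right.mpr (Equiv.Perm.SameCycle.refl B z)))
    (join_r_left (Equiv.Perm.sameCycle_apply_right.mpr (Equiv.Perm.SameCycle.refl A (B z))))

theorem genus_bound [Finite α] [DecidableEq α] (A B : Perm α) :
    numCycles A + numCycles B + numCycles (A * B) ≤ Nat.card α + 2 * numBlocks A B := by
  generalize hk : Nat.card α - numCycles B = k
  induction k using Nat.strong_induction_on generalizing B with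
  | _ k IH =>
  rcases Nat.eq_zero_or_pos k with rfl | hkpos
  · -- B = 1
    have hB1 : B = 1 := by
      refine eq_one_of_numCycles_eq_card (le_antisymm (numCycles_le_card B) ?_)
      omega
    subst hB1
    have h1 : numBlocks A 1 = numCycles A := by
      rw [numBlocks, joinSetoid_one]; rfl
    rw [mul_one, h1, numCycles_one]
    omega
  · -- B ≠ 1, pick a moved point
    have hBne : B ≠ 1 := by
      intro hcon
      subst hcon
      rw [numCycles_one] at hk
      omega
    obtain ⟨a, ha⟩ : ∃ a, B a ≠ a := by
      by_contra hall
      push_neg at hall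
      exact hBne (Equiv.ext hall)
    set b := B a with hb
    have hab : a ≠ b := Ne.symm ha
    have hSC : B.SameCycle a b :=
      Equiv.Perm.sameCycle_apply_right.mpr (Equiv.Perm.SameCycle.refl B a)
    set B' := B * Equiv.swap a b with hB'
    have hBB' : B = B' * Equiv.swap a b := by
      rw [hB', mul_assoc, Equiv.swap_mul_self, mul_one]
    have hcB' : numCycles B' = numCycles B + 1 := numCycles_mul_swap_of_sameCycle hab hSC
    have hB'app : ∀ z, z ≠ a → z ≠ b → B' z = B z := by
      intro z hza hzb
      rw [hB', Perm.mul_apply, Equiv.swap_apply_of_ne_of_ne hza hzb]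
    have hB'a : B' a = B b := by rw [hB', Perm.mul_apply, Equiv.swap_apply_left]
    have hB'b : B' b = b := by rw [hB', Perm.mul_apply, Equiv.swap_apply_right, ← hb]
    have hB'le : numCycles B' ≤ Nat.card α := numCycles_le_card B'
    have hIH := IH (k - 1) (by omega) B' (by omega)
    -- join A B' ≤ join A B
    have hjle : joinSetoid A B' ≤ joinSetoid A B := by
      refine sup_le le_sup_left ?_
      rw [sameCycleSetoid_le_iff]
      intro z
      rcases eq_or_ne z a with rfl | hza
      · rw [hB'a]
        refine Setoid.trans' _ (join_r_right hSC) ?_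
        exact join_r_right (Equiv.Perm.sameCycle_apply_right.mpr (Equiv.Perm.SameCycle.refl B b))
      rcases eq_or_ne z b with rfl | hzb
      · rw [hB'b]
      · rw [hB'app z hza hzb]
        exact join_r_right (Equiv.Perm.sameCycle_apply_right.mpr (Equiv.Perm.SameCycle.refl B z))
    have hABAB' : A * B = A * B' * Equiv.swap a b := by rw [mul_assoc, ← hBB']
    by_cases hc : (joinSetoid A B').r a b
    · -- blocks are equal
      have hjge : joinSetoid A B ≤ joinSetoid A B' := by
        refine sup_le le_sup_left ?_
        rw [sameCycleSetoid_le_iff]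
        intro z
        rcases eq_or_ne z a with rfl | hza
        · rw [← hb]; exact hc
        rcases eq_or_ne z b with rfl | hzb
        · have h1 : B b = B' a := hB'a.symm
          rw [h1]
          refine Setoid.trans' _ (Setoid.symm' _ hc) ?_
          exact join_r_right
            (Equiv.Perm.sameCycle_apply_right.mpr (Equiv.Perm.SameCycle.refl B' a))
        · rw [← hB'app z hza hzb]
          exact join_r_right
            (Equiv.Perm.sameCycle_apply_right.mpr (Equiv.Perm.SameCycle.refl B' z))
      have hjeq : joinSetoid A B = joinSetoid A B' := le_antisymm hjge hjle
      have hnb : numBlocks A B = numBlocks A B' := by rw [numBlocks, numBlocks, hjeq]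
      have hswap : numCycles (A * B) ≤ numCycles (A * B') + 1 := by
        by_cases hsc : (A * B').SameCycle a b
        · rw [hABAB', numCycles_mul_swap_of_sameCycle hab hsc]
        · have := numCycles_mul_swap_of_not_sameCycle hab hsc
          rw [hABAB']
          omega
      omega
    · -- blocks merge
      have hnsc : ¬ (A * B').SameCycle a b := fun hcon => hc (sameCycle_mul_le_join A B' hcon)
      have hmerge : numCycles (A * B) + 1 = numCycles (A * B') := by
        have := numCycles_mul_swap_of_not_sameCycle hab hnsc
        rw [hABAB']
        omega
      have hcollapse : numBlocks A B' = numBlocks A B + 1 := by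
        refine collapse_lemma _ _ hjle a b hc (join_r_right hSC) ?_
        intro z w hzw
        have hle : joinSetoid A B ≤ pairSetoid (joinSetoid A B') a b := by
          refine sup_le ?_ ?_
          · intro u v huv
            exact Or.inl (join_r_left huv)
          · rw [sameCycleSetoid_le_iff]
            intro u
            rcases eq_or_ne u a with rfl | hua
            · rw [← hb]
              exact Or.inr (Or.inl ⟨Setoid.refl' _ _, Setoid.refl' _ _⟩)
            rcases eq_or_ne u b with rfl | hub
            · have h1 : B b = B' a := hB'a.symm
              rw [h1]
              exact Or.inr (Or.inr ⟨Setoid.refl' _ _,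
                join_r_right
                  (Equiv.Perm.sameCycle_apply_right.mpr (Equiv.Perm.SameCycle.refl B' a))⟩)
            · rw [← hB'app u hua hub]
              exact Or.inl (join_r_right
                (Equiv.Perm.sameCycle_apply_right.mpr (Equiv.Perm.SameCycle.refl B' u)))
        exact hle hzw
      omega

/-! ### Restriction of restriction -/

theorem numCycles_empty [IsEmpty α] (σ : Perm α) : numCycles σ = 0 := by
  have : IsEmpty (Quotient (sameCycleSetoid σ)) := by
    constructor
    intro q
    induction q using Quotient.ind with
    | _ a => exact isEmptyElim a
  simp [numCycles, Nat.card_of_isEmpty]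

theorem restrict_restrict {σ : Perm α} {p q : α → Prop}
    (hσp : Invariant σ p) (hσq : Invariant σ q) (hqp : ∀ z, q z → p z) :
    restrictPerm (restrictPerm σ p) (fun y => q (y : α)) =
      (Equiv.subtypeSubtypeEquivSubtype (fun {x} hx => hqp x hx)).symm.permCongr
        (restrictPerm σ q) := by
  have hinner : Invariant (restrictPerm σ p) (fun y => q (y : α)) := by
    intro y
    show q ((restrictPerm σ p y : α)) ↔ _
    rw [restrictPerm_apply hσp]
    exact hσq _
  ext y
  show ((restrictPerm (restrictPerm σ p) (fun y => q (y : α)) y : { x // p x }) : α) = _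
  rw [restrictPerm_apply hinner, restrictPerm_apply hσp]
  have : ∀ w : {y : {x // p x} // q (y : α)},
      ((Equiv.subtypeSubtypeEquivSubtype (fun {x} hx => hqp x hx)).symm.permCongr
        (restrictPerm σ q) w : { x // p x }) =
      (⟨(restrictPerm σ q ⟨(w : { x // p x }), w.2⟩ : α),
        hqp _ (restrictPerm σ q ⟨(w : { x // p x }), w.2⟩).2⟩ : { x // p x }) := by
    intro w
    rfl
  rw [this y]
  rw [restrictPerm_apply hσq]

/-! ### Geodesic summation -/

theorem geodesic_sum_aux (n : ℕ) : ∀ (α : Type u) (_ : Finite α) (π ρ : Perm α),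
    Nat.card α ≤ n →
    (∀ x y : α, π.SameCycle x y → ρ.SameCycle x y) →
    (∀ x : α, numCycles (restrictPerm π (ρ.SameCycle x)) +
        numCycles ((restrictPerm π (ρ.SameCycle x))⁻¹ * restrictPerm ρ (ρ.SameCycle x)) =
        Nat.card {y // ρ.SameCycle x y} + 1) →
    numCycles π + numCycles (π⁻¹ * ρ) = Nat.card α + numCycles ρ := by
  induction n with
  | zero =>
    intro α hfin π ρ hcard h1 h2
    have hemp : IsEmpty α := by
      have h0 : Nat.card α = 0 := by omega
      rcases Nat.card_eq_zero.mp h0 with h | h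
      · exact h
      · exact absurd h (not_infinite_iff_finite.mpr hfin)
    haveI := hemp
    rw [numCycles_empty, numCycles_empty, numCycles_empty, Nat.card_of_isEmpty]
  | succ n IHn =>
    intro α hfin π ρ hcard h1 h2
    rcases isEmpty_or_nonempty α with hemp | hne
    · haveI := hemp
      rw [numCycles_empty, numCycles_empty, numCycles_empty, Nat.card_of_isEmpty]
    rcases Nat.lt_or_ge (Nat.card α) (n + 1) with hlt | hge
    · exact IHn α hfin π ρ (by omega) h1 h2
    -- main case
    obtain ⟨x₀⟩ := hne
    set p : α → Prop := fun z => ρ.SameCycle x₀ z with hp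
    have hinvρ : Invariant ρ p := fun z => Equiv.Perm.sameCycle_apply_right
    have hπstep : ∀ z : α, ρ.SameCycle z (π z) := fun z =>
      h1 z (π z) (Equiv.Perm.sameCycle_apply_right.mpr (Equiv.Perm.SameCycle.refl π z))
    have hinvπ : Invariant π p := by
      intro z
      constructor
      · intro h
        exact h.trans (hπstep z).symm
      · intro h
        exact h.trans (hπstep z)
    have hπinvρ : Invariant (π⁻¹ * ρ) p := hinvπ.inv.mul hinvρ
    set π' := restrictPerm π (fun z => ¬ p z) with hπ'
    set ρ' := restrictPerm ρ (fun z => ¬ p z) with hρ'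
    have hcards : Nat.card α = Nat.card {z // p z} + Nat.card {z // ¬ p z} :=
      card_split (α := α) p
    have hcycle1 : numCycles (restrictPerm ρ p) = 1 := numCycles_restrict_cycle ρ x₀
    have hprod : restrictPerm (π⁻¹ * ρ) p = (restrictPerm π p)⁻¹ * restrictPerm ρ p := by
      rw [restrictPerm_mul hinvπ.inv hinvρ, restrictPerm_inv hinvπ]
    have hsplitπ : numCycles π = numCycles (restrictPerm π p) + numCycles π' :=
      numCycles_split hinvπ
    have hsplitπρ : numCycles (π⁻¹ * ρ) =
        numCycles ((restrictPerm π p)⁻¹ * restrictPerm ρ p) + numCycles (π'⁻¹ * ρ') := by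
      have hprod' : restrictPerm (π⁻¹ * ρ) (fun z => ¬ p z) = π'⁻¹ * ρ' := by
        rw [hπ', hρ', restrictPerm_mul hinvπ.inv.not hinvρ.not, restrictPerm_inv hinvπ.not]
      rw [numCycles_split hπinvρ, hprod, hprod']
    have hsplitρ : numCycles ρ = 1 + numCycles ρ' := by
      rw [numCycles_split hinvρ, hcycle1]
    have hx₀ : numCycles (restrictPerm π p) +
        numCycles ((restrictPerm π p)⁻¹ * restrictPerm ρ p) =
        Nat.card {y // p y} + 1 := h2 x₀
    have hcardp : 1 ≤ Nat.card {z // p z} := by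
      have : Nonempty {z // p z} := ⟨⟨x₀, Equiv.Perm.SameCycle.refl ρ x₀⟩⟩
      exact Nat.card_pos
    have hcard' : Nat.card {z // ¬ p z} ≤ n := by omega
    have h1' : ∀ x y : {z // ¬ p z}, π'.SameCycle x y → ρ'.SameCycle x y := by
      intro x y hxy
      rw [restrictPerm_sameCycle hinvπ.not] at hxy
      rw [restrictPerm_sameCycle hinvρ.not]
      exact h1 _ _ hxy
    have h2' : ∀ x : {z // ¬ p z}, numCycles (restrictPerm π' (ρ'.SameCycle x)) +
        numCycles ((restrictPerm π' (ρ'.SameCycle x))⁻¹ * restrictPerm ρ' (ρ'.SameCycle x)) =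
        Nat.card {y // ρ'.SameCycle x y} + 1 := by
      intro x
      have hpred : (ρ'.SameCycle x) = (fun y : {z // ¬ p z} => ρ.SameCycle (x : α) (y : α)) := by
        funext y
        exact propext (restrictPerm_sameCycle hinvρ.not)
      have hqp : ∀ z, ρ.SameCycle (x : α) z → ¬ p z := by
        intro z hz hpz
        exact x.2 (hpz.trans hz.symm)
      have hinvq_ρ : Invariant ρ (fun z => ρ.SameCycle (x : α) z) := fun z =>
        Equiv.Perm.sameCycle_apply_right
      have hinvq_π : Invariant π (fun z => ρ.SameCycle (x : α) z) := by
        intro z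
        constructor
        · intro h
          exact h.trans (hπstep z).symm
        · intro h
          exact h.trans (hπstep z)
      have hRπ := restrict_restrict (σ := π) hinvπ.not hinvq_π hqp
      have hRρ := restrict_restrict (σ := ρ) hinvρ.not hinvq_ρ hqp
      rw [hpred, hRπ, hRρ]
      set E := (Equiv.subtypeSubtypeEquivSubtype
        (p := fun z => ¬ p z) (q := fun z => ρ.SameCycle (x : α) z)
        (fun {z} hz => hqp z hz)).symm with hE
      have hmul : (E.permCongr (restrictPerm π (ρ.SameCycle (x : α))))⁻¹ *
          E.permCongr (restrictPerm ρ (ρ.SameCycle (x : α))) =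
          E.permCongr ((restrictPerm π (ρ.SameCycle (x : α)))⁻¹ *
            restrictPerm ρ (ρ.SameCycle (x : α))) := by
        rw [← permCongr_inv E, ← permCongr_mul E]
      rw [hmul, numCycles_congr, numCycles_congr]
      have hcardeq : Nat.card {y : {z // ¬ p z} // ρ.SameCycle (x : α) (y : α)} =
          Nat.card {y // ρ.SameCycle (x : α) y} := Nat.card_congr E.symm
      rw [hcardeq]
      exact h2 (x : α)
    have hIH : numCycles π' + numCycles (π'⁻¹ * ρ') =
        Nat.card {z // ¬ p z} + numCycles ρ' :=
      IHn {z // ¬ p z} inferInstance π' ρ' hcard' h1' h2'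
    omega

theorem geodesic_sum {α : Type u} [Finite α] (π ρ : Perm α)
    (h1 : ∀ x y : α, π.SameCycle x y → ρ.SameCycle x y)
    (h2 : ∀ x : α, numCycles (restrictPerm π (ρ.SameCycle x)) +
        numCycles ((restrictPerm π (ρ.SameCycle x))⁻¹ * restrictPerm ρ (ρ.SameCycle x)) =
        Nat.card {y // ρ.SameCycle x y} + 1) :
    numCycles π + numCycles (π⁻¹ * ρ) = Nat.card α + numCycles ρ :=
  geodesic_sum_aux (Nat.card α) α inferInstance π ρ le_rfl h1 h2

/-! ### Remaining general lemmas -/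

theorem numCycles_mul_comm (a b : Perm α) : numCycles (a * b) = numCycles (b * a) := by
  have h := numCycles_congr (e := (a⁻¹ : Perm α)) (a * b)
  rw [Equiv.permCongr_eq_mul] at h
  have h2 : a⁻¹ * (a * b) * a⁻¹⁻¹ = b * a := by group
  rw [h2] at h
  exact h.symm

theorem numBlocks_lt [Finite α] (σ τ : Perm α) {x y : α}
    (hσ : σ.SameCycle x y) (hτ : ¬ τ.SameCycle x y) :
    numBlocks σ τ < numCycles τ := by
  cases nonempty_fintype α
  classical
  have : Fintype (Quotient (sameCycleSetoid τ)) := Fintype.ofFinite _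
  have : Fintype (Quotient (joinSetoid σ τ)) := Fintype.ofFinite _
  rw [numBlocks, numCycles, Nat.card_eq_fintype_card, Nat.card_eq_fintype_card]
  set f : Quotient (sameCycleSetoid τ) → Quotient (joinSetoid σ τ) :=
    Quotient.lift (fun z => (Quotient.mk (joinSetoid σ τ) z))
      (fun u v h => Quotient.sound (join_r_right h)) with hf
  refine Fintype.card_lt_of_surjective_not_injective f ?_ ?_
  · intro q
    induction q using Quotient.ind with
    | _ a => exact ⟨Quotient.mk _ a, rfl⟩
  · intro hinj
    have h1 : f (Quotient.mk _ x) = f (Quotient.mk _ y) :=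
      Quotient.sound (join_r_left hσ)
    exact hτ (Quotient.exact (hinj h1))

theorem SNC.nonempty [Finite α] {γ π : Perm α} (h : SNC γ π) : Nonempty α := by
  by_contra h'
  rw [not_nonempty_iff] at h'
  have h2 := h.2
  rw [numCycles_empty, numCycles_empty, numCycles_empty, Nat.card_of_isEmpty] at h2
  omega

theorem exists_crossing [Finite α] {σ γ : Perm α} {p : α → Prop}
    (htop : JoinTop σ γ) (hγ : Invariant γ p) (u v : α) (hu : p u) (hv : ¬ p v) :
    ∃ x y, σ.SameCycle x y ∧ p x ∧ ¬ p y := by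
  by_contra hcon
  push_neg at hcon
  have hσinv : Invariant σ p := by
    intro z
    constructor
    · intro h
      exact hcon (σ z) z (Equiv.Perm.sameCycle_apply_left.mpr (Equiv.Perm.SameCycle.refl σ z)) h
    · intro h
      exact hcon z (σ z)
        (Equiv.Perm.sameCycle_apply_right.mpr (Equiv.Perm.SameCycle.refl σ z)) h
  exact hv ((join_invariant hσinv hγ (htop u v)).mp hu)

/-! ### The abstract main theorem -/

theorem main_abstract [Finite α] [DecidableEq α] (γ π σ : Perm α) (p₀ : α → Prop)
    (hγinv : Invariant γ p₀) (hπinv : Invariant π p₀)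
    (hσ : SNC γ σ) (hle : le' π (σ⁻¹ * γ))
    (hπ2 : SNC (restrictPerm γ p₀) (restrictPerm π p₀))
    (hπ3 : SNC (restrictPerm γ (fun x => ¬ p₀ x)) (restrictPerm π (fun x => ¬ p₀ x))) :
    ncRel σ (γ * π⁻¹) ∧ numBlocks σ (γ * π⁻¹) + 1 = numCycles (γ * π⁻¹) := by
  set n := Nat.card α with hn
  set τ := γ * π⁻¹ with hτ
  have hπγ : Invariant (π⁻¹ * γ) p₀ := hπinv.inv.mul hγinv
  have hτinv : Invariant τ p₀ := hγinv.mul hπinv.inv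
  -- Step 1 : the sum-4 identity
  have h2a := hπ2.2
  have h3a := hπ3.2
  have s1 : numCycles π = numCycles (restrictPerm π p₀) +
      numCycles (restrictPerm π (fun x => ¬ p₀ x)) := numCycles_split hπinv
  have s2 : numCycles (π⁻¹ * γ) =
      numCycles ((restrictPerm π p₀)⁻¹ * restrictPerm γ p₀) +
      numCycles ((restrictPerm π (fun x => ¬ p₀ x))⁻¹ *
        restrictPerm γ (fun x => ¬ p₀ x)) := by
    rw [numCycles_split hπγ, restrictPerm_mul hπinv.inv hγinv, restrictPerm_inv hπinv,
      restrictPerm_mul hπinv.inv.not hγinv.not, restrictPerm_inv hπinv.not]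
  have s3 : numCycles γ = numCycles (restrictPerm γ p₀) +
      numCycles (restrictPerm γ (fun x => ¬ p₀ x)) := numCycles_split hγinv
  have scard : n = Nat.card {x // p₀ x} + Nat.card {x // ¬ p₀ x} := card_split p₀
  have hsum4 : numCycles π + numCycles (π⁻¹ * γ) + numCycles γ = n + 4 := by omega
  -- Step 2 : the geodesic identity
  have hgeo : numCycles π + numCycles (π⁻¹ * (σ⁻¹ * γ)) =
      n + numCycles (σ⁻¹ * γ) := geodesic_sum π (σ⁻¹ * γ) hle.1 hle.2
  -- Step 3 : cyclic invariance
  have hc1 : numCycles τ = numCycles (π⁻¹ * γ) := numCycles_mul_comm γ π⁻¹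
  have hc2 : numCycles (σ⁻¹ * τ) = numCycles (π⁻¹ * (σ⁻¹ * γ)) := by
    have h : σ⁻¹ * τ = (σ⁻¹ * γ) * π⁻¹ := by rw [hτ]; group
    rw [h, numCycles_mul_comm]
  -- Step 4 : global genus bound
  have hT1 : numCycles σ + numCycles (σ⁻¹ * τ) + numCycles τ ≤ n + 2 * numBlocks σ τ := by
    have h := genus_bound σ (σ⁻¹ * τ)
    have hsimp : σ * (σ⁻¹ * τ) = τ := by group
    rw [hsimp, numBlocks_mul_left] at h
    exact h
  -- Step 5 : upper bound via a crossing cycle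
  obtain ⟨u⟩ : Nonempty {x // p₀ x} := hπ2.nonempty
  obtain ⟨v⟩ : Nonempty {x // ¬ p₀ x} := hπ3.nonempty
  obtain ⟨x₀, y₀, hxy, hx₀, hy₀⟩ :=
    exists_crossing hσ.1 hγinv (u : α) (v : α) u.2 v.2
  have hnotτ : ¬ τ.SameCycle x₀ y₀ := fun hc => hy₀ ((hτinv.sameCycle hc).mp hx₀)
  have hlt : numBlocks σ τ < numCycles τ := numBlocks_lt σ τ hxy hnotτ
  -- Step 6 : conclude the count
  have hσ2 := hσ.2
  rw [← hn] at hσ2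
  have goal2 : numBlocks σ τ + 1 = numCycles τ := by omega
  have hEq : numCycles σ + numCycles (σ⁻¹ * τ) + numCycles τ = n + 2 * numBlocks σ τ := by
    omega
  refine ⟨?_, goal2⟩
  -- Step 7 : per-block non-crossing
  intro x
  have hPσ : Invariant σ (fun z => (joinSetoid σ τ).r x z) := block_invariant_left σ τ x
  have hPτ : Invariant τ (fun z => (joinSetoid σ τ).r x z) := block_invariant_right σ τ x
  have hTop : JoinTop (restrictPerm σ ((joinSetoid σ τ).r x))
      (restrictPerm τ ((joinSetoid σ τ).r x)) := joinTop_restrict_block σ τ x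
  haveI : Nonempty {z // (joinSetoid σ τ).r x z} := ⟨⟨x, Setoid.refl' _ x⟩⟩
  have nb1 : numBlocks (restrictPerm σ ((joinSetoid σ τ).r x))
      (restrictPerm τ ((joinSetoid σ τ).r x)) = 1 := numBlocks_eq_one hTop
  have nbsplit : numBlocks σ τ = 1 +
      numBlocks (restrictPerm σ (fun z => ¬ (joinSetoid σ τ).r x z))
        (restrictPerm τ (fun z => ¬ (joinSetoid σ τ).r x z)) := by
    rw [numBlocks_split hPσ hPτ, nb1]
  have t1 : numCycles σ = numCycles (restrictPerm σ ((joinSetoid σ τ).r x)) +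
      numCycles (restrictPerm σ (fun z => ¬ (joinSetoid σ τ).r x z)) :=
    numCycles_split hPσ
  have t2 : numCycles (σ⁻¹ * τ) =
      numCycles ((restrictPerm σ ((joinSetoid σ τ).r x))⁻¹ *
        restrictPerm τ ((joinSetoid σ τ).r x)) +
      numCycles ((restrictPerm σ (fun z => ¬ (joinSetoid σ τ).r x z))⁻¹ *
        restrictPerm τ (fun z => ¬ (joinSetoid σ τ).r x z)) := by
    rw [numCycles_split (hPσ.inv.mul hPτ), restrictPerm_mul hPσ.inv hPτ,
      restrictPerm_inv hPσ, restrictPerm_mul hPσ.inv.not hPτ.not, restrictPerm_inv hPσ.not]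
  have t3 : numCycles τ = numCycles (restrictPerm τ ((joinSetoid σ τ).r x)) +
      numCycles (restrictPerm τ (fun z => ¬ (joinSetoid σ τ).r x z)) :=
    numCycles_split hPτ
  have tcard : n = Nat.card {z // (joinSetoid σ τ).r x z} +
      Nat.card {z // ¬ (joinSetoid σ τ).r x z} := card_split _
  -- genus bound on the block
  have gB : numCycles (restrictPerm σ ((joinSetoid σ τ).r x)) +
      numCycles ((restrictPerm σ ((joinSetoid σ τ).r x))⁻¹ *
        restrictPerm τ ((joinSetoid σ τ).r x)) +
      numCycles (restrictPerm τ ((joinSetoid σ τ).r x)) ≤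
      Nat.card {z // (joinSetoid σ τ).r x z} + 2 := by
    have h := genus_bound (restrictPerm σ ((joinSetoid σ τ).r x))
      ((restrictPerm σ ((joinSetoid σ τ).r x))⁻¹ * restrictPerm τ ((joinSetoid σ τ).r x))
    have hsimp : restrictPerm σ ((joinSetoid σ τ).r x) *
        ((restrictPerm σ ((joinSetoid σ τ).r x))⁻¹ *
          restrictPerm τ ((joinSetoid σ τ).r x)) =
        restrictPerm τ ((joinSetoid σ τ).r x) := by group
    rw [hsimp, numBlocks_mul_left, nb1] at h
    omega
  -- genus bound on the complement
  have gC : numCycles (restrictPerm σ (fun z => ¬ (joinSetoid σ τ).r x z)) +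
      numCycles ((restrictPerm σ (fun z => ¬ (joinSetoid σ τ).r x z))⁻¹ *
        restrictPerm τ (fun z => ¬ (joinSetoid σ τ).r x z)) +
      numCycles (restrictPerm τ (fun z => ¬ (joinSetoid σ τ).r x z)) ≤
      Nat.card {z // ¬ (joinSetoid σ τ).r x z} +
        2 * numBlocks (restrictPerm σ (fun z => ¬ (joinSetoid σ τ).r x z))
          (restrictPerm τ (fun z => ¬ (joinSetoid σ τ).r x z)) := by
    have h := genus_bound (restrictPerm σ (fun z => ¬ (joinSetoid σ τ).r x z))
      ((restrictPerm σ (fun z => ¬ (joinSetoid σ τ).r x z))⁻¹ *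
        restrictPerm τ (fun z => ¬ (joinSetoid σ τ).r x z))
    have hsimp : restrictPerm σ (fun z => ¬ (joinSetoid σ τ).r x z) *
        ((restrictPerm σ (fun z => ¬ (joinSetoid σ τ).r x z))⁻¹ *
          restrictPerm τ (fun z => ¬ (joinSetoid σ τ).r x z)) =
        restrictPerm τ (fun z => ¬ (joinSetoid σ τ).r x z) := by group
    rw [hsimp, numBlocks_mul_left] at h
    exact h
  refine ⟨hTop, ?_⟩
  omega


/-- if `σ ∈ S_NC(p,q,l)`, `π ≤ σ⁻¹γ` and `π ∈ NC(p) × S_NC(q,l)`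
(the first circle is `π`-invariant, and the restrictions of `π` to the first circle
and to the union of the last two are non-crossing w.r.t. the restrictions of `γ`),
then `σ ≲⁽¹⁾ γπ⁻¹`. -/
theorem stmt17 (p q l : ℕ)
    (γ : Equiv.Perm ((i : Fin 3) × Fin (![p, q, l] i)))
    (hγ : γ = blockRotate ![p, q, l])
    (π σ : Equiv.Perm ((i : Fin 3) × Fin (![p, q, l] i)))
    (hσ : SNC γ σ) (hle : le' π (σ⁻¹ * γ))
    (hπ1 : ∀ x, (π x).1 = 0 ↔ x.1 = 0)
    (hπ2 : SNC (restrictPerm γ (fun x => x.1 = 0)) (restrictPerm π (fun x => x.1 = 0)))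
    (hπ3 : SNC (restrictPerm γ (fun x => x.1 ≠ 0)) (restrictPerm π (fun x => x.1 ≠ 0))) :
    ncRel σ (γ * π⁻¹) ∧ numBlocks σ (γ * π⁻¹) + 1 = numCycles (γ * π⁻¹) := by

  have hγinv : Invariant γ (fun x : (i : Fin 3) × Fin (![p, q, l] i) => x.1 = 0) := by
    intro x
    have h1 : (γ x).1 = x.1 := by
      rw [hγ]
      rcases x with ⟨i, j⟩
      rfl
    show (γ x).fst = 0 ↔ x.fst = 0
    rw [h1]
  have hπinv : Invariant π (fun x : (i : Fin 3) × Fin (![p, q, l] i) => x.1 = 0) := hπ1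
  exact main_abstract γ π σ (fun x => x.1 = 0) hγinv hπinv hσ hle hπ2 hπ3


end ThirdOrderFree
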